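/- arXiv:2303.14422 — 3 statements merged into one kernel-verified Lean document; each statement's English description precedes it below -/
import Mathlib

section
/- The composite mM-MCMC transition satisfies detailed balance with respect to the extended distribution: for all z, z' ∈ ℝ^m and x, x' ∈ ℝ^d at which all the quantities below are finite and strictly positive, μ_ext(z,x) · q₀(z,z') · α_CG(z,z') · ν_λ(x'|z') · α_f(z,z') = μ_ext(z',x') · q₀(z',z) · α_CG(z',z) · ν_λ(x|z) · α_f(z',z), where α_CG(z,z') = min{1, (μ̄₀(z') q₀(z',z)) / (μ̄₀(z) q₀(z,z'))} is the macroscopic acceptance probability and α_f(z,z') = min{1, (μ_λ(z') μ̄₀(z)) / (μ_λ(z) μ̄₀(z'))} is the microscopic acceptance probability. -/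
open MeasureTheory Real


lemma key_det_bal (q q' a a' L L' : ℝ) (hq : 0 < q) (hq' : 0 < q')
    (ha : 0 < a) (ha' : 0 < a') (hL : 0 < L) (hL' : 0 < L') :
    q * min 1 ((a' * q') / (a * q)) * min 1 ((L' * a) / (L * a')) * L
      = q' * min 1 ((a * q) / (a' * q')) * min 1 ((L * a') / (L' * a)) * L' := by
  have haq : 0 < a * q := mul_pos ha hq
  have haq' : 0 < a' * q' := mul_pos ha' hq'
  have hLa : 0 < L * a' := mul_pos hL ha'
  have hLa' : 0 < L' * a := mul_pos hL' ha
  rcases le_total (a' * q') (a * q) with h1 | h1 <;>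
    rcases le_total (L' * a) (L * a') with h2 | h2
  · rw [min_eq_right ((div_le_one haq).2 h1), min_eq_right ((div_le_one hLa).2 h2),
      min_eq_left ((one_le_div haq').2 h1), min_eq_left ((one_le_div hLa').2 h2)]
    field_simp
  · rw [min_eq_right ((div_le_one haq).2 h1), min_eq_right ((div_le_one hLa').2 h2),
      min_eq_left ((one_le_div haq').2 h1), min_eq_left ((one_le_div hLa).2 h2)]
    field_simp
  · rw [min_eq_right ((div_le_one haq').2 h1), min_eq_right ((div_le_one hLa).2 h2),
      min_eq_left ((one_le_div haq).2 h1), min_eq_left ((one_le_div hLa').2 h2)]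
    field_simp
  · rw [min_eq_right ((div_le_one haq').2 h1), min_eq_right ((div_le_one hLa').2 h2),
      min_eq_left ((one_le_div haq).2 h1), min_eq_left ((one_le_div hLa).2 h2)]
    field_simp

theorem stmt_4
    (d m : ℕ) (hd : 0 < d) (hm : 0 < m)
    (β lam : ℝ) (hβ : 0 < β) (hlam : 0 < lam)
    (V : EuclideanSpace ℝ (Fin d) → ℝ) (hV : Measurable V)
    (hVint : Integrable (fun x => Real.exp (-β * V x)))
    (ZV : ℝ) (hZV : ZV = ∫ x, Real.exp (-β * V x)) (hZVpos : 0 < ZV)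
    (ξ : EuclideanSpace ℝ (Fin d) → EuclideanSpace ℝ (Fin m)) (hξ : Measurable ξ)
    (μ : EuclideanSpace ℝ (Fin d) → ℝ)
    (hμ : ∀ x, μ x = ZV⁻¹ * Real.exp (-β * V x))
    (μext : EuclideanSpace ℝ (Fin m) → EuclideanSpace ℝ (Fin d) → ℝ)
    (hμext : ∀ z x, μext z x =
      (lam * β / (2 * Real.pi)) ^ ((m : ℝ) / 2) *
        Real.exp (-β * lam * ‖ξ x - z‖ ^ 2 / 2) * μ x)
    (μlam : EuclideanSpace ℝ (Fin m) → ℝ)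
    (hμlam : ∀ z, μlam z = ∫ x, μext z x)
    (ν : EuclideanSpace ℝ (Fin d) → EuclideanSpace ℝ (Fin m) → ℝ)
    (hν : ∀ x z, 0 < μlam z → ν x z = μext z x / μlam z)
    (q₀ : EuclideanSpace ℝ (Fin m) → EuclideanSpace ℝ (Fin m) → ℝ)
    (hq₀ : ∀ z z', 0 < q₀ z z')
    (μbar₀ : EuclideanSpace ℝ (Fin m) → ℝ)
    (hμbar₀ : ∀ z, 0 < μbar₀ z)
    (αCG : EuclideanSpace ℝ (Fin m) → EuclideanSpace ℝ (Fin m) → ℝ)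
    (hαCG : ∀ z z', αCG z z' = min 1 ((μbar₀ z' * q₀ z' z) / (μbar₀ z * q₀ z z')))
    (αf : EuclideanSpace ℝ (Fin m) → EuclideanSpace ℝ (Fin m) → ℝ)
    (hαf : ∀ z z', αf z z' = min 1 ((μlam z' * μbar₀ z) / (μlam z * μbar₀ z')))
    (z z' : EuclideanSpace ℝ (Fin m)) (x x' : EuclideanSpace ℝ (Fin d))
    (hz : 0 < μlam z) (hz' : 0 < μlam z')
    (hx : 0 < μext z x) (hx' : 0 < μext z' x') :
    μext z x * q₀ z z' * αCG z z' * ν x' z' * αf z z'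
      = μext z' x' * q₀ z' z * αCG z' z * ν x z * αf z' z := by
  have key := key_det_bal (q₀ z z') (q₀ z' z) (μbar₀ z) (μbar₀ z') (μlam z) (μlam z')
    (hq₀ z z') (hq₀ z' z) (hμbar₀ z) (hμbar₀ z') hz hz'
  rw [hν x' z' hz', hν x z hz, hαCG z z', hαCG z' z, hαf z z', hαf z' z]
  have hzne : μlam z ≠ 0 := ne_of_gt hz
  have hz'ne : μlam z' ≠ 0 := ne_of_gt hz'
  generalize min 1 (μbar₀ z' * q₀ z' z / (μbar₀ z * q₀ z z')) = A at key ⊢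
  generalize min 1 (μbar₀ z * q₀ z z' / (μbar₀ z' * q₀ z' z)) = A' at key ⊢
  generalize min 1 (μlam z' * μbar₀ z / (μlam z * μbar₀ z')) = B at key ⊢
  generalize min 1 (μlam z * μbar₀ z' / (μlam z' * μbar₀ z)) = B' at key ⊢
  field_simp
  linear_combination key
end

section
/- The mM-MCMC Markov transition leaves the extended distribution invariant: define the sub-transition density p((z,x),(z',x')) = q₀(z,z') α_CG(z,z') ν_λ(x'|z') α_f(z,z'), where α_CG(z,z') = min{1, (μ̄₀(z') q₀(z',z)) / (μ̄₀(z) q₀(z,z'))} and α_f(z,z') = min{1, (μ_λ(z') μ̄₀(z)) / (μ_λ(z) μ̄₀(z'))}, and the rejection probability r(z,x) = 1 − ∫∫ p((z,x),(z',x')) dz' dx'. Assume q₀(z,·) is a probability density on ℝ^m for every z, ν_λ(·|z') is a probability density on ℝ^d for every z', 0 < μ_λ(z) < ∞ for all z, and μ̄₀, q₀ are strictly positive and all occurring integrals are finite. Then for every bounded measurable f : ℝ^m × ℝ^d → ℝ, ∫∫ [ ∫∫ f(z',x') p((z,x),(z',x')) dz' dx' + f(z,x) r(z,x) ] μ_ext(z,x)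 dz dx = ∫∫ f(z,x) μ_ext(z,x) dz dx. -/
open MeasureTheory Real

lemma min_key (a a' b b' c c' : ℝ) (ha : 0 < a) (ha' : 0 < a') (hb : 0 < b)
    (hb' : 0 < b') (hc : 0 < c) (hc' : 0 < c') :
    a * min 1 ((b' * a') / (b * a)) * min 1 ((c' * b) / (c * b')) * c =
    a' * min 1 ((b * a) / (b' * a')) * min 1 ((c * b') / (c' * b)) * c' := by
  have h1 : min 1 ((b' * a') / (b * a)) = min (b * a) (b' * a') / (b * a) := by
    rw [← min_div_div_right (by positivity : (0:ℝ) ≤ b * a), div_self (by positivity)]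
  have h2 : min 1 ((c' * b) / (c * b')) = min (c * b') (c' * b) / (c * b') := by
    rw [← min_div_div_right (by positivity : (0:ℝ) ≤ c * b'), div_self (by positivity)]
  have h3 : min 1 ((b * a) / (b' * a')) = min (b' * a') (b * a) / (b' * a') := by
    rw [← min_div_div_right (by positivity : (0:ℝ) ≤ b' * a'), div_self (by positivity)]
  have h4 : min 1 ((c * b') / (c' * b)) = min (c' * b) (c * b') / (c' * b) := by
    rw [← min_div_div_right (by positivity : (0:ℝ) ≤ c' * b), div_self (by positivity)]
  rw [h1, h2, h3, h4, min_comm (b' * a') (b * a), min_comm (c' * b) (c * b')]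
  field_simp

theorem stmt_5
    (d m : ℕ) (hd : 0 < d) (hm : 0 < m)
    (β lam : ℝ) (hβ : 0 < β) (hlam : 0 < lam)
    (V : EuclideanSpace ℝ (Fin d) → ℝ) (hV : Measurable V)
    (hVint : Integrable (fun x => Real.exp (-β * V x)))
    (ZV : ℝ) (hZV : ZV = ∫ x, Real.exp (-β * V x)) (hZVpos : 0 < ZV)
    (ξ : EuclideanSpace ℝ (Fin d) → EuclideanSpace ℝ (Fin m)) (hξ : Measurable ξ)
    (μ : EuclideanSpace ℝ (Fin d) → ℝ)
    (hμ : ∀ x, μ x = ZV⁻¹ * Real.exp (-β * V x))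
    (μext : EuclideanSpace ℝ (Fin m) → EuclideanSpace ℝ (Fin d) → ℝ)
    (hμext : ∀ z x, μext z x =
      (lam * β / (2 * Real.pi)) ^ ((m : ℝ) / 2) *
        Real.exp (-β * lam * ‖ξ x - z‖ ^ 2 / 2) * μ x)
    (μlam : EuclideanSpace ℝ (Fin m) → ℝ)
    (hμlam : ∀ z, μlam z = ∫ x, μext z x)
    (hμlam_pos : ∀ z, 0 < μlam z)
    (hμext_int : ∀ z, Integrable (fun x => μext z x))
    (ν : EuclideanSpace ℝ (Fin d) → EuclideanSpace ℝ (Fin m) → ℝ)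
    (hν : ∀ x z, ν x z = μext z x / μlam z)
    (hνprob : ∀ z', (∫ x', ν x' z') = 1)
    (q₀ : EuclideanSpace ℝ (Fin m) → EuclideanSpace ℝ (Fin m) → ℝ)
    (hq₀pos : ∀ z z', 0 < q₀ z z')
    (hq₀prob : ∀ z, (∫ z', q₀ z z') = 1)
    (μbar₀ : EuclideanSpace ℝ (Fin m) → ℝ)
    (hμbar₀pos : ∀ z, 0 < μbar₀ z)
    (αCG : EuclideanSpace ℝ (Fin m) → EuclideanSpace ℝ (Fin m) → ℝ)
    (hαCG : ∀ z z', αCG z z' = min 1 ((μbar₀ z' * q₀ z' z) / (μbar₀ z * q₀ z z')))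
    (αf : EuclideanSpace ℝ (Fin m) → EuclideanSpace ℝ (Fin m) → ℝ)
    (hαf : ∀ z z', αf z z' = min 1 ((μlam z' * μbar₀ z) / (μlam z * μbar₀ z')))
    (ptrans : (EuclideanSpace ℝ (Fin m) × EuclideanSpace ℝ (Fin d)) →
      (EuclideanSpace ℝ (Fin m) × EuclideanSpace ℝ (Fin d)) → ℝ)
    (hptrans : ∀ p p', ptrans p p' = q₀ p.1 p'.1 * αCG p.1 p'.1 * ν p'.2 p'.1 * αf p.1 p'.1)
    (r : EuclideanSpace ℝ (Fin m) → EuclideanSpace ℝ (Fin d) → ℝ)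
    (hr : ∀ z x, r z x = 1 - ∫ p' : EuclideanSpace ℝ (Fin m) × EuclideanSpace ℝ (Fin d),
      ptrans (z, x) p')
    (f : EuclideanSpace ℝ (Fin m) → EuclideanSpace ℝ (Fin d) → ℝ)
    (hf : Measurable (fun p : EuclideanSpace ℝ (Fin m) × EuclideanSpace ℝ (Fin d) => f p.1 p.2))
    (C : ℝ) (hfC : ∀ z x, |f z x| ≤ C)
    (hint1 : ∀ p : EuclideanSpace ℝ (Fin m) × EuclideanSpace ℝ (Fin d),
      Integrable (fun p' : EuclideanSpace ℝ (Fin m) × EuclideanSpace ℝ (Fin d) => ptrans p p'))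
    (hint2 : Integrable (fun q : (EuclideanSpace ℝ (Fin m) × EuclideanSpace ℝ (Fin d)) ×
        (EuclideanSpace ℝ (Fin m) × EuclideanSpace ℝ (Fin d)) =>
      f q.2.1 q.2.2 * ptrans q.1 q.2 * μext q.1.1 q.1.2))
    (hint3 : Integrable (fun p : EuclideanSpace ℝ (Fin m) × EuclideanSpace ℝ (Fin d) =>
      μext p.1 p.2)) :
    (∫ p : EuclideanSpace ℝ (Fin m) × EuclideanSpace ℝ (Fin d),
        ((∫ p' : EuclideanSpace ℝ (Fin m) × EuclideanSpace ℝ (Fin d),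
            f p'.1 p'.2 * ptrans p p') + f p.1 p.2 * r p.1 p.2) * μext p.1 p.2)
      = ∫ p : EuclideanSpace ℝ (Fin m) × EuclideanSpace ℝ (Fin d), f p.1 p.2 * μext p.1 p.2 := by
  have hμlam_ne : ∀ z, μlam z ≠ 0 := fun z => (hμlam_pos z).ne'
  have hμe : ∀ z x, μext z x = ν x z * μlam z := by
    intro z x; rw [hν, div_mul_cancel₀ _ (hμlam_ne z)]
  -- pointwise detailed-balance symmetry
  have hsym : ∀ (p p' : EuclideanSpace ℝ (Fin m) × EuclideanSpace ℝ (Fin d)),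
      ptrans p p' * μext p.1 p.2 = ptrans p' p * μext p'.1 p'.2 := by
    rintro ⟨z, x⟩ ⟨z', x'⟩
    simp only [hptrans, hαCG, hαf]
    rw [hμe z x, hμe z' x']
    have key := min_key (q₀ z z') (q₀ z' z) (μbar₀ z) (μbar₀ z') (μlam z) (μlam z')
      (hq₀pos z z') (hq₀pos z' z) (hμbar₀pos z) (hμbar₀pos z') (hμlam_pos z) (hμlam_pos z')
    linear_combination (ν x z * ν x' z') * key
  -- pass to product measure
  have hvol : (volume : Measure ((EuclideanSpace ℝ (Fin m) × EuclideanSpace ℝ (Fin d)) ×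
      (EuclideanSpace ℝ (Fin m) × EuclideanSpace ℝ (Fin d)))) =
      (volume : Measure (EuclideanSpace ℝ (Fin m) × EuclideanSpace ℝ (Fin d))).prod volume :=
    rfl
  have hint2' : Integrable (fun q : (EuclideanSpace ℝ (Fin m) × EuclideanSpace ℝ (Fin d)) ×
        (EuclideanSpace ℝ (Fin m) × EuclideanSpace ℝ (Fin d)) =>
      f q.2.1 q.2.2 * ptrans q.1 q.2 * μext q.1.1 q.1.2)
      ((volume : Measure (EuclideanSpace ℝ (Fin m) × EuclideanSpace ℝ (Fin d))).prod volume) := by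
    rw [← hvol]; exact hint2
  have hfuneq : (fun q : (EuclideanSpace ℝ (Fin m) × EuclideanSpace ℝ (Fin d)) ×
        (EuclideanSpace ℝ (Fin m) × EuclideanSpace ℝ (Fin d)) =>
      f q.1.1 q.1.2 * ptrans q.1 q.2 * μext q.1.1 q.1.2) =
      ((fun q : (EuclideanSpace ℝ (Fin m) × EuclideanSpace ℝ (Fin d)) ×
        (EuclideanSpace ℝ (Fin m) × EuclideanSpace ℝ (Fin d)) =>
      f q.2.1 q.2.2 * ptrans q.1 q.2 * μext q.1.1 q.1.2) ∘ Prod.swap) := by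
    funext q
    simp only [Function.comp_apply, Prod.fst_swap, Prod.snd_swap]
    rw [mul_assoc, mul_assoc, hsym q.2 q.1]
  have hint2s : Integrable (fun q : (EuclideanSpace ℝ (Fin m) × EuclideanSpace ℝ (Fin d)) ×
        (EuclideanSpace ℝ (Fin m) × EuclideanSpace ℝ (Fin d)) =>
      f q.1.1 q.1.2 * ptrans q.1 q.2 * μext q.1.1 q.1.2)
      ((volume : Measure (EuclideanSpace ℝ (Fin m) × EuclideanSpace ℝ (Fin d))).prod volume) := by
    rw [hfuneq]; exact hint2'.swap
  -- the two double integrals agree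
  have hdbl : (∫ q, f q.1.1 q.1.2 * ptrans q.1 q.2 * μext q.1.1 q.1.2
        ∂((volume : Measure (EuclideanSpace ℝ (Fin m) × EuclideanSpace ℝ (Fin d))).prod volume))
      = ∫ q, f q.2.1 q.2.2 * ptrans q.1 q.2 * μext q.1.1 q.1.2
        ∂((volume : Measure (EuclideanSpace ℝ (Fin m) × EuclideanSpace ℝ (Fin d))).prod volume) := by
    rw [hfuneq]
    simp only [Function.comp_def]
    exact integral_prod_swap (fun q : (EuclideanSpace ℝ (Fin m) × EuclideanSpace ℝ (Fin d)) ×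
        (EuclideanSpace ℝ (Fin m) × EuclideanSpace ℝ (Fin d)) =>
      f q.2.1 q.2.2 * ptrans q.1 q.2 * μext q.1.1 q.1.2)
  -- integrability of the marginals
  have hg1int : Integrable (fun p : EuclideanSpace ℝ (Fin m) × EuclideanSpace ℝ (Fin d) =>
      ∫ p' : EuclideanSpace ℝ (Fin m) × EuclideanSpace ℝ (Fin d),
        f p'.1 p'.2 * ptrans p p' * μext p.1 p.2) := by
    simpa using hint2'.integral_prod_left
  have hg3int : Integrable (fun p : EuclideanSpace ℝ (Fin m) × EuclideanSpace ℝ (Fin d) =>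
      ∫ p' : EuclideanSpace ℝ (Fin m) × EuclideanSpace ℝ (Fin d),
        f p.1 p.2 * ptrans p p' * μext p.1 p.2) := by
    simpa using hint2s.integral_prod_left
  have hT2 : Integrable (fun p : EuclideanSpace ℝ (Fin m) × EuclideanSpace ℝ (Fin d) =>
      f p.1 p.2 * μext p.1 p.2) :=
    hint3.bdd_mul hf.aestronglyMeasurable (Filter.Eventually.of_forall fun p => by
      rw [Real.norm_eq_abs]; exact hfC p.1 p.2)
  -- marginal Fubini identities
  have hg1 : (∫ p : EuclideanSpace ℝ (Fin m) × EuclideanSpace ℝ (Fin d),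
      ∫ p' : EuclideanSpace ℝ (Fin m) × EuclideanSpace ℝ (Fin d),
        f p'.1 p'.2 * ptrans p p' * μext p.1 p.2)
      = ∫ q, f q.2.1 q.2.2 * ptrans q.1 q.2 * μext q.1.1 q.1.2
        ∂((volume : Measure (EuclideanSpace ℝ (Fin m) × EuclideanSpace ℝ (Fin d))).prod volume) :=
    integral_integral hint2'
  have hg3 : (∫ p : EuclideanSpace ℝ (Fin m) × EuclideanSpace ℝ (Fin d),
      ∫ p' : EuclideanSpace ℝ (Fin m) × EuclideanSpace ℝ (Fin d),
        f p.1 p.2 * ptrans p p' * μext p.1 p.2)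
      = ∫ q, f q.1.1 q.1.2 * ptrans q.1 q.2 * μext q.1.1 q.1.2
        ∂((volume : Measure (EuclideanSpace ℝ (Fin m) × EuclideanSpace ℝ (Fin d))).prod volume) :=
    integral_integral hint2s
  -- rewrite the integrand of the LHS
  have hpt : ∀ p : EuclideanSpace ℝ (Fin m) × EuclideanSpace ℝ (Fin d),
      ((∫ p' : EuclideanSpace ℝ (Fin m) × EuclideanSpace ℝ (Fin d),
          f p'.1 p'.2 * ptrans p p') + f p.1 p.2 * r p.1 p.2) * μext p.1 p.2
      = (∫ p' : EuclideanSpace ℝ (Fin m) × EuclideanSpace ℝ (Fin d),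
          f p'.1 p'.2 * ptrans p p' * μext p.1 p.2)
        + (f p.1 p.2 * μext p.1 p.2
          - ∫ p' : EuclideanSpace ℝ (Fin m) × EuclideanSpace ℝ (Fin d),
              f p.1 p.2 * ptrans p p' * μext p.1 p.2) := by
    intro p
    have hrp : r p.1 p.2 = 1 - ∫ p' : EuclideanSpace ℝ (Fin m) × EuclideanSpace ℝ (Fin d),
        ptrans p p' := hr p.1 p.2
    rw [hrp]
    have e1 : (∫ p' : EuclideanSpace ℝ (Fin m) × EuclideanSpace ℝ (Fin d),
        f p'.1 p'.2 * ptrans p p') * μext p.1 p.2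
        = ∫ p' : EuclideanSpace ℝ (Fin m) × EuclideanSpace ℝ (Fin d),
            f p'.1 p'.2 * ptrans p p' * μext p.1 p.2 :=
      (integral_mul_const _ _).symm
    have e3 : (∫ p' : EuclideanSpace ℝ (Fin m) × EuclideanSpace ℝ (Fin d),
        ptrans p p') * (f p.1 p.2 * μext p.1 p.2)
        = ∫ p' : EuclideanSpace ℝ (Fin m) × EuclideanSpace ℝ (Fin d),
            f p.1 p.2 * ptrans p p' * μext p.1 p.2 := by
      rw [← integral_mul_const]
      exact integral_congr_ae (Filter.Eventually.of_forall fun p' => by ring)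
    linear_combination e1 - e3
  calc (∫ p : EuclideanSpace ℝ (Fin m) × EuclideanSpace ℝ (Fin d),
        ((∫ p' : EuclideanSpace ℝ (Fin m) × EuclideanSpace ℝ (Fin d),
            f p'.1 p'.2 * ptrans p p') + f p.1 p.2 * r p.1 p.2) * μext p.1 p.2)
      = ∫ p : EuclideanSpace ℝ (Fin m) × EuclideanSpace ℝ (Fin d),
          ((∫ p' : EuclideanSpace ℝ (Fin m) × EuclideanSpace ℝ (Fin d),
            f p'.1 p'.2 * ptrans p p' * μext p.1 p.2)
          + (f p.1 p.2 * μext p.1 p.2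
            - ∫ p' : EuclideanSpace ℝ (Fin m) × EuclideanSpace ℝ (Fin d),
                f p.1 p.2 * ptrans p p' * μext p.1 p.2)) :=
        integral_congr_ae (Filter.Eventually.of_forall hpt)
    _ = (∫ p : EuclideanSpace ℝ (Fin m) × EuclideanSpace ℝ (Fin d),
          ∫ p' : EuclideanSpace ℝ (Fin m) × EuclideanSpace ℝ (Fin d),
            f p'.1 p'.2 * ptrans p p' * μext p.1 p.2)
        + ((∫ p : EuclideanSpace ℝ (Fin m) × EuclideanSpace ℝ (Fin d),
            f p.1 p.2 * μext p.1 p.2)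
          - ∫ p : EuclideanSpace ℝ (Fin m) × EuclideanSpace ℝ (Fin d),
            ∫ p' : EuclideanSpace ℝ (Fin m) × EuclideanSpace ℝ (Fin d),
              f p.1 p.2 * ptrans p p' * μext p.1 p.2) := by
        have hsub : Integrable (fun p : EuclideanSpace ℝ (Fin m) × EuclideanSpace ℝ (Fin d) =>
            f p.1 p.2 * μext p.1 p.2
            - ∫ p' : EuclideanSpace ℝ (Fin m) × EuclideanSpace ℝ (Fin d),
                f p.1 p.2 * ptrans p p' * μext p.1 p.2) := hT2.sub hg3int
        rw [integral_add hg1int hsub, integral_sub hT2 hg3int]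
    _ = ∫ p : EuclideanSpace ℝ (Fin m) × EuclideanSpace ℝ (Fin d),
          f p.1 p.2 * μext p.1 p.2 := by
        rw [hg1, hg3, ← hdbl]
        ring
end

section
/- Derivative of the free energy of the filtered marginal (thermodynamic-integration identity for a one-dimensional reaction coordinate): let m = 1 and fix z₀ ∈ ℝ. Assume 0 < μ_λ(z) < ∞ for z in a neighborhood of z₀, and assume there exists an integrable function g : ℝ^d → [0,∞) with |ξ(x) − z| μ_ext(z,x) ≤ g(x) for all x and all z in that neighborhood. Then Q_λ(z) = −β^{-1} ln μ_λ(z) is differentiable at z₀ with Q_λ'(z₀) = λ ∫_{ℝ^d} (z₀ − ξ(x)) ν_λ(x|z₀) dx, i.e. the derivative of the free energy equals λ times the mean deviation of the reaction coordinate under the reconstruction distribution. -/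
open MeasureTheory Real

theorem stmt_15
    (d : ℕ) (hd : 0 < d)
    (β lam : ℝ) (hβ : 0 < β) (hlam : 0 < lam)
    (V : EuclideanSpace ℝ (Fin d) → ℝ) (hV : Measurable V)
    (hVint : Integrable (fun x => Real.exp (-β * V x)))
    (ZV : ℝ) (hZV : ZV = ∫ x, Real.exp (-β * V x)) (hZVpos : 0 < ZV)
    (ξ : EuclideanSpace ℝ (Fin d) → ℝ) (hξ : Measurable ξ)
    (μ : EuclideanSpace ℝ (Fin d) → ℝ)
    (hμ : ∀ x, μ x = ZV⁻¹ * Real.exp (-β * V x))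
    (μext : ℝ → EuclideanSpace ℝ (Fin d) → ℝ)
    (hμext : ∀ z x, μext z x =
      (lam * β / (2 * Real.pi)) ^ ((1 : ℝ) / 2) *
        Real.exp (-β * lam * (ξ x - z) ^ 2 / 2) * μ x)
    (μlam : ℝ → ℝ) (hμlam : ∀ z, μlam z = ∫ x, μext z x)
    (ν : EuclideanSpace ℝ (Fin d) → ℝ → ℝ)
    (hν : ∀ x z, 0 < μlam z → ν x z = μext z x / μlam z)
    (Qlam : ℝ → ℝ) (hQlam : ∀ z, Qlam z = -β⁻¹ * Real.log (μlam z))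
    (z₀ : ℝ) (s : Set ℝ) (hs : s ∈ nhds z₀)
    (hpos : ∀ z ∈ s, 0 < μlam z)
    (hintg : ∀ z ∈ s, Integrable (fun x => μext z x))
    (g : EuclideanSpace ℝ (Fin d) → ℝ) (hg : Integrable g)
    (hdom : ∀ z ∈ s, ∀ x, |ξ x - z| * μext z x ≤ g x) :
    HasDerivAt Qlam (lam * ∫ x, (z₀ - ξ x) * ν x z₀) z₀ := by
  obtain ⟨ε, hε, hball⟩ := Metric.mem_nhds_iff.mp hs
  have hz₀s : z₀ ∈ s := mem_of_mem_nhds hs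
  have hμpos : 0 < μlam z₀ := hpos z₀ hz₀s
  set C : ℝ := (lam * β / (2 * Real.pi)) ^ ((1 : ℝ) / 2) with hC
  have hCnn : 0 ≤ C := Real.rpow_nonneg (by positivity) _
  have hμnn : ∀ x, 0 ≤ μ x := fun x => by
    rw [hμ]; positivity
  have hμextnn : ∀ z x, 0 ≤ μext z x := fun z x => by
    rw [hμext]; have := hμnn x; positivity
  -- measurability
  have hμmeas : Measurable μ := by
    have : Measurable fun x => ZV⁻¹ * Real.exp (-β * V x) :=
      (measurable_const.mul ((hV.const_mul _).exp))
    simpa [funext hμ] using this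
  have hmeasext : ∀ z, Measurable (μext z) := fun z => by
    have : Measurable fun x => C * Real.exp (-β * lam * (ξ x - z) ^ 2 / 2) * μ x := by
      apply Measurable.mul
      · exact measurable_const.mul (Measurable.exp (by
          apply Measurable.div_const
          exact ((hξ.sub_const z).pow_const 2).const_mul _))
      · exact hμmeas
    simpa [funext (hμext z)] using this
  set F' : ℝ → EuclideanSpace ℝ (Fin d) → ℝ :=
    fun z x => β * lam * (ξ x - z) * μext z x with hF'
  -- pointwise derivative
  have hderiv : ∀ x, ∀ z : ℝ, HasDerivAt (fun t => μext t x) (F' z x) z := by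
    intro x z
    have h1 : HasDerivAt (fun t : ℝ => -β * lam * (ξ x - t) ^ 2 / 2)
        (β * lam * (ξ x - z)) z := by
      have h0 : HasDerivAt (fun t : ℝ => (ξ x - t) ^ 2) (-(2 * (ξ x - z))) z := by
        have := ((hasDerivAt_id z).const_sub (ξ x)).pow 2
        exact this.congr_deriv (by norm_num)
      have := (h0.const_mul (-β * lam)).div_const 2
      refine this.congr_deriv ?_
      ring
    have h2 : HasDerivAt (fun t : ℝ => Real.exp (-β * lam * (ξ x - t) ^ 2 / 2))
        (Real.exp (-β * lam * (ξ x - z) ^ 2 / 2) * (β * lam * (ξ x - z))) z := h1.exp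
    have h3 := (h2.const_mul C).mul_const (μ x)
    have heq : (fun t => μext t x) =
        fun t : ℝ => C * Real.exp (-β * lam * (ξ x - t) ^ 2 / 2) * μ x := by
      funext t; rw [hμext]
    rw [heq, hF']
    refine h3.congr_deriv ?_
    symm
    show β * lam * (ξ x - z) * μext z x = _
    rw [hμext z x]; ring
  have hbound : ∀ᵐ x : EuclideanSpace ℝ (Fin d), ∀ z ∈ Metric.ball z₀ ε,
      ‖F' z x‖ ≤ β * lam * g x := by
    filter_upwards with x z hz
    have hzs : z ∈ s := hball hz
    have := hdom z hzs x
    have h0 : ‖F' z x‖ = β * lam * (|ξ x - z| * μext z x) := by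
      rw [hF']
      rw [Real.norm_eq_abs, abs_mul, abs_mul, abs_of_nonneg (hμextnn z x),
        abs_of_pos (mul_pos hβ hlam)]
      ring
    rw [h0]
    exact mul_le_mul_of_nonneg_left this (by positivity)
  have key := hasDerivAt_integral_of_dominated_loc_of_deriv_le (μ := volume)
      (F := fun z x => μext z x) (F' := F') (bound := fun x => β * lam * g x)
      (Metric.ball_mem_nhds z₀ hε)
      (Filter.Eventually.of_forall fun z => (hmeasext z).aestronglyMeasurable)
      (hintg z₀ hz₀s)
      (by
        apply Measurable.aestronglyMeasurable
        exact (((hξ.sub_const z₀).const_mul (β * lam)).mul (hmeasext z₀)))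
      hbound
      (hg.const_mul (β * lam))
      (Filter.Eventually.of_forall fun x => fun z _ => hderiv x z)
  obtain ⟨hF'int, hderiv_int⟩ := key
  have hμlam_deriv : HasDerivAt μlam (∫ x, F' z₀ x) z₀ := by
    have : μlam = fun z => ∫ x, μext z x := funext hμlam
    rw [this]; exact hderiv_int
  have hlog : HasDerivAt (fun z => Real.log (μlam z))
      ((∫ x, F' z₀ x) / μlam z₀) z₀ := hμlam_deriv.log (ne_of_gt hμpos)
  have hQ : HasDerivAt Qlam (-β⁻¹ * ((∫ x, F' z₀ x) / μlam z₀)) z₀ := by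
    have : Qlam = fun z => -β⁻¹ * Real.log (μlam z) := funext hQlam
    rw [this]; exact hlog.const_mul (-β⁻¹)
  convert hQ using 1
  have hν' : ∀ x, ν x z₀ = μext z₀ x / μlam z₀ := fun x => hν x z₀ hμpos
  have h1 : (fun x => (z₀ - ξ x) * ν x z₀)
      = fun x => (μlam z₀)⁻¹ • (-(β * lam))⁻¹ • F' z₀ x := by
    funext x
    rw [hν' x, hF']
    simp only [smul_eq_mul]
    field_simp
    ring
  rw [h1, integral_smul, integral_smul, smul_eq_mul, smul_eq_mul]
  field_simp
end
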